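/- (Delayer effect for a single-input neuron.) Let N be a LI&F neuron whose weight list has length 1, say Weights(N) = [w], with τ(N) ≤ w. Then for every binary input list input : list ℕ, the chronological output of the neuron N′ obtained by resetting N and then processing input equals [0] ++ input; that is, the neuron transfers its input sequence to its output unchanged, with a delay of one time step. -/

import Mathlib

/-- A LI&F (leaky integrate-and-fire) neuron. -/
structure Neuron where
  Output : List ℕ
  Weights : List ℚ
  Leak_Factor : ℚ
  Tau : ℚ
  Current : ℚ
  Output_Bin : ∀ x ∈ Output, x = 0 ∨ x = 1
  LeakRange : 0 ≤ Leak_Factor ∧ Leak_Factor ≤ 1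
  PosTau : 0 < Tau
  WRange : ∀ w ∈ Weights, -1 ≤ w ∧ w ≤ 1

/-- Weighted sum of the inputs of a neuron. -/
def potential : List ℚ → List ℕ → ℚ
  | [], _ => 0
  | _ :: _, [] => 0
  | w :: ws, x :: xs => if x = 0 then potential ws xs else potential ws xs + w

/-- The next membrane potential of a neuron. -/
def NextPotential (N : Neuron) (xs : List ℕ) : ℚ :=
  if N.Tau ≤ N.Current then potential N.Weights xs
  else potential N.Weights xs + N.Leak_Factor * N.Current

/-- The next output of a neuron. -/
def NextOutput (N : Neuron) (xs : List ℕ) : ℕ :=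
  if N.Tau ≤ NextPotential N xs then 1 else 0

/-- One state change of a neuron on processing the inputs `xs`. -/
def NextNeuron (N : Neuron) (xs : List ℕ) : Neuron where
  Output := NextOutput N xs :: N.Output
  Weights := N.Weights
  Leak_Factor := N.Leak_Factor
  Tau := N.Tau
  Current := NextPotential N xs
  Output_Bin := by
    intro x hx
    rcases List.mem_cons.mp hx with h | h
    · subst h
      unfold NextOutput
      split
      · right; rfl
      · left; rfl
    · exact N.Output_Bin x h
  LeakRange := N.LeakRange
  PosTau := N.PosTau
  WRange := N.WRange

/-- Reinitialize a neuron to its initial state. -/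
def ResetNeuron (N : Neuron) : Neuron where
  Output := [0]
  Weights := N.Weights
  Leak_Factor := N.Leak_Factor
  Tau := N.Tau
  Current := 0
  Output_Bin := by
    intro x hx
    exact Or.inl (List.mem_singleton.mp hx)
  LeakRange := N.LeakRange
  PosTau := N.PosTau
  WRange := N.WRange

/-- Resetting `N` and then processing the input list, feeding the inputs one at a
time (as singleton input lists). -/
def processInput (N : Neuron) (input : List ℕ) : Neuron :=
  input.foldl (fun M x => NextNeuron M [x]) (ResetNeuron N)

/-- Delayer effect for a single-input neuron: if the single weight is at least
the threshold, the chronological output equals `0 :: input`. -/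
lemma delayer_aux (w τ0 : ℚ) (hwτ : τ0 ≤ w) (input : List ℕ)
    (hbin : ∀ x ∈ input, x = 0 ∨ x = 1) :
    ∀ M : Neuron, M.Weights = [w] → M.Tau = τ0 →
      (M.Current = 0 ∨ τ0 ≤ M.Current) →
      (input.foldl (fun M x => NextNeuron M [x]) M).Output
        = input.reverse ++ M.Output := by
  induction input with
  | nil => intro M _ _ _; simp
  | cons x xs ih =>
    intro M hW hT hC
    have hpos : 0 < τ0 := hT ▸ M.PosTau
    have hx := hbin x List.mem_cons_self
    have hpot : potential M.Weights [x] = if x = 0 then 0 else w := by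
      rw [hW]; rcases hx with h | h <;> simp [h, potential]
    have hNP : NextPotential M [x] = if x = 0 then 0 else w := by
      unfold NextPotential
      rcases hC with h | h
      · rw [if_neg (by rw [hT, h]; exact not_le.mpr hpos), h, hpot]; ring_nf
      · rw [if_pos (hT ▸ h), hpot]
    have hNO : NextOutput M [x] = x := by
      unfold NextOutput
      rcases hx with h | h
      · subst h; rw [hT, hNP]; simp [not_le.mpr hpos]
      · subst h; rw [hT, hNP]; simp [hwτ]
    have hstep : (NextNeuron M [x]).Output = x :: M.Output := by
      simp [NextNeuron, hNO]
    simp only [List.foldl_cons]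
    rw [ih (fun y hy => hbin y (List.mem_cons_of_mem x hy)) (NextNeuron M [x])
      hW hT ?_]
    · rw [hstep]; simp
    · rw [show (NextNeuron M [x]).Current = NextPotential M [x] from rfl, hNP]
      rcases hx with h | h
      · simp [h]
      · simp [h, hwτ]

theorem delayer_effect (N : Neuron) (w : ℚ) (input : List ℕ)
    (hw : N.Weights = [w]) (hwτ : N.Tau ≤ w)
    (hbin : ∀ x ∈ input, x = 0 ∨ x = 1) :
    (processInput N input).Output.reverse = [0] ++ input := by
  have h := delayer_aux w N.Tau hwτ input hbin (ResetNeuron N) hw rfl (Or.inl rfl)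
  unfold processInput
  rw [h]
  simp [ResetNeuron]
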